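/- Let η_1 = λ_1 - μ_1 > 0, η_2 = μ_2 - λ_2 μ_1/λ_1 > 0, with η_1 ≠ η_2, a = 1 - η_2/η_1, L = min{η_1, η_2}, and L_1 = (λ_1 + |λ_1 - λ_2|)(η_1 + η_2)/η_1. If the transformed coordinates (x̃_1(t), x̃_2(t)) of a solution of the SIS competition system satisfy y(0) := max{|x̃_1(0)|, x̃_2(0)/|a|} ≤ L/(2 L_1), then for all t ≥ 0 one has |x̃_1(t)| ≤ 2 y(0) e^{-t L} and x̃_2(t) ≤ 2 |a| y(0) e^{-t L}. -/

import Mathlib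

open Filter Set Topology

lemma tendsto_slope_abs_of_hasDerivAt {u : ℝ → ℝ} {x d c : ℝ} (hu : HasDerivAt u d x)
    (h1 : 0 < u x → d ≤ c) (h2 : u x < 0 → -d ≤ c) (h3 : u x = 0 → |d| ≤ c) :
    ∃ G, G ≤ c ∧ Tendsto (slope (fun t => |u t|) x) (𝓝[>] x) (𝓝 G) := by
  have hsl : Tendsto (slope u x) (𝓝[>] x) (𝓝 d) :=
    ((hasDerivAt_iff_tendsto_slope.1 hu).mono_left
      (nhdsWithin_mono x fun z hz => ne_of_gt hz))
  rcases lt_trichotomy (u x) 0 with hux | hux | hux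
  · refine ⟨-d, h2 hux, ?_⟩
    have hev : ∀ᶠ z in 𝓝[>] x, slope (fun t => |u t|) x z = - slope u x z := by
      have : ∀ᶠ z in 𝓝 x, u z < 0 := (hu.continuousAt.eventually_lt continuousAt_const hux)
      filter_upwards [nhdsWithin_le_nhds this] with z hz
      simp [slope_def_field, abs_of_neg hz, abs_of_neg hux]
      ring
    exact hsl.neg.congr' (Filter.EventuallyEq.symm hev)
  · refine ⟨|d|, h3 hux, ?_⟩
    have hev : ∀ᶠ z in 𝓝[>] x, slope (fun t => |u t|) x z = |slope u x z| := by
      filter_upwards [self_mem_nhdsWithin] with z hz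
      have hzx : (0:ℝ) < z - x := sub_pos.2 hz
      simp [slope_def_field, hux, abs_div, abs_of_pos hzx]
    exact (hsl.abs.congr' (Filter.EventuallyEq.symm hev))
  · refine ⟨d, h1 hux, ?_⟩
    have hev : ∀ᶠ z in 𝓝[>] x, slope (fun t => |u t|) x z = slope u x z := by
      have : ∀ᶠ z in 𝓝 x, 0 < u z := (continuousAt_const.eventually_lt hu.continuousAt hux)
      filter_upwards [nhdsWithin_le_nhds this] with z hz
      simp [slope_def_field, abs_of_pos hz, abs_of_pos hux]
    exact (hsl.congr' (Filter.EventuallyEq.symm hev))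

lemma eventually_slope_max_lt {g h : ℝ → ℝ} {x G H r : ℝ}
    (hgc : ContinuousAt g x) (hhc : ContinuousAt h x)
    (hg : Tendsto (slope g x) (𝓝[>] x) (𝓝 G))
    (hh : Tendsto (slope h x) (𝓝[>] x) (𝓝 H))
    (hG : h x ≤ g x → G < r)
    (hH : g x ≤ h x → H < r) :
    ∀ᶠ z in 𝓝[>] x, slope (fun t => max (g t) (h t)) x z < r := by
  rcases lt_trichotomy (g x) (h x) with hc | hc | hc
  · have hev : ∀ᶠ z in 𝓝 x, g z < h z := hgc.eventually_lt hhc hc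
    filter_upwards [nhdsWithin_le_nhds hev, hh.eventually_lt_const (hH hc.le)] with z h1 h2
    rwa [slope_def_field, max_eq_right h1.le, max_eq_right hc.le, ← slope_def_field]
  · filter_upwards [hg.eventually_lt_const (hG hc.ge), hh.eventually_lt_const (hH hc.le),
      self_mem_nhdsWithin] with z h1 h2 hz
    have hzx : (0:ℝ) < z - x := sub_pos.2 hz
    have hmax : max (g z) (h z) - max (g x) (h x) = max (g z - g x) (h z - h x) := by
      rw [max_eq_left hc.ge, ← hc, max_sub_sub_right]
    rw [slope_def_field] at h1 h2 ⊢
    rw [hmax, div_lt_iff₀ hzx]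
    exact max_lt ((div_lt_iff₀ hzx).1 h1) ((div_lt_iff₀ hzx).1 h2)
  · have hev : ∀ᶠ z in 𝓝 x, h z < g z := hhc.eventually_lt hgc hc
    filter_upwards [nhdsWithin_le_nhds hev, hg.eventually_lt_const (hG hc.le)] with z h1 h2
    rwa [slope_def_field, max_eq_left h1.le, max_eq_left hc.le, ← slope_def_field]

set_option maxHeartbeats 4000000 in
theorem sis_transformed_exponential_decay
    (lam1 lam2 mu1 mu2 eta1 eta2 a L L1 : ℝ)
    (hlam2 : 0 < lam2) (hmu2 : 0 < mu2) (hmu1 : 0 < mu1) (hlt : mu1 < lam1)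
    (hratio : lam2 / mu2 < lam1 / mu1)
    (heta1 : eta1 = lam1 - mu1) (heta2 : eta2 = mu2 - lam2 * mu1 / lam1)
    (hne : eta1 ≠ eta2)
    (ha : a = 1 - eta2 / eta1)
    (hL : L = min eta1 eta2)
    (hL1 : L1 = (lam1 + |lam1 - lam2|) * (eta1 + eta2) / eta1)
    (tx1 tx2 : ℝ → ℝ) (htx2nn : ∀ t : ℝ, 0 ≤ tx2 t)
    (hode1 : ∀ t : ℝ, HasDerivAt tx1
      (-eta1 * tx1 t - lam1 * (tx1 t) ^ 2
        - (eta2 * (lam1 - lam2) / eta1) * (tx2 t / a) ^ 2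
        + (lam1 - lam2 + lam1 * eta2 / eta1) * tx1 t * (tx2 t / a)) t)
    (hode2 : ∀ t : ℝ, HasDerivAt tx2
      (-eta2 * tx2 t - lam2 * tx2 t * tx1 t + (lam2 / a) * (eta2 / eta1) * (tx2 t) ^ 2) t)
    (hy0 : max |tx1 0| (tx2 0 / |a|) ≤ L / (2 * L1)) :
    ∀ t : ℝ, 0 ≤ t →
      |tx1 t| ≤ 2 * max |tx1 0| (tx2 0 / |a|) * Real.exp (-t * L) ∧
      tx2 t ≤ 2 * |a| * max |tx1 0| (tx2 0 / |a|) * Real.exp (-t * L) := by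
  -- basic positivity
  have hlam1 : 0 < lam1 := hmu1.trans hlt
  have he1 : 0 < eta1 := by rw [heta1]; linarith
  have he2 : 0 < eta2 := by
    rw [heta2]
    rw [div_lt_div_iff₀ hmu2 hmu1] at hratio
    have h2 : lam2 * mu1 / lam1 < mu2 := by
      rw [div_lt_iff₀ hlam1]; nlinarith
    linarith
  have hLpos : 0 < L := by rw [hL]; exact lt_min he1 he2
  have hLe1 : L ≤ eta1 := by rw [hL]; exact min_le_left _ _
  have hLe2 : L ≤ eta2 := by rw [hL]; exact min_le_right _ _
  have ha0 : a ≠ 0 := by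
    rw [ha]
    intro hca
    apply hne
    have : eta2 / eta1 = 1 := by linarith
    field_simp at this
    linarith
  have hA : (0:ℝ) ≤ |lam1 - lam2| := abs_nonneg _
  have hL1pos : 0 < L1 := by
    rw [hL1]
    apply div_pos (mul_pos (by linarith) (by linarith)) he1
  have haabs : 0 < |a| := abs_pos.2 ha0
  set y0 := max |tx1 0| (tx2 0 / |a|) with hy0def
  set f : ℝ → ℝ := fun s => max |tx1 s| (tx2 s / |a|) with hfdef
  have hc1 : Continuous tx1 := continuous_iff_continuousAt.2 fun s =>
    (hode1 s).differentiableAt.continuousAt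
  have hc2 : Continuous tx2 := continuous_iff_continuousAt.2 fun s =>
    (hode2 s).differentiableAt.continuousAt
  have hfc : Continuous f := (hc1.abs).max (hc2.div_const _)
  have hfnn : ∀ s, 0 ≤ f s := fun s =>
    le_trans (div_nonneg (htx2nn s) (abs_nonneg a)) (le_max_right _ _)
  have hy0nn : 0 ≤ y0 := hfnn 0
  -- the quadratic bound constant identity
  have hL1id : L1 = lam1 + eta2 * |lam1 - lam2| / eta1 + (|lam1 - lam2| + lam1 * eta2 / eta1) := by
    rw [hL1]; field_simp; ring
  -- pointwise bound K1
  have K1 : ∀ s : ℝ,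
      |(-eta1 * tx1 s - lam1 * (tx1 s) ^ 2
        - (eta2 * (lam1 - lam2) / eta1) * (tx2 s / a) ^ 2
        + (lam1 - lam2 + lam1 * eta2 / eta1) * tx1 s * (tx2 s / a)) + eta1 * tx1 s|
        ≤ L1 * (f s) ^ 2 := by
    intro s
    have hg : |tx1 s| ≤ f s := le_max_left _ _
    have hh : tx2 s / |a| ≤ f s := le_max_right _ _
    have hhnn : 0 ≤ tx2 s / |a| := div_nonneg (htx2nn s) (abs_nonneg a)
    have hm : 0 ≤ f s := hfnn s
    have hx2 : (tx1 s) ^ 2 ≤ (f s) ^ 2 := by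
      rw [← sq_abs]; exact pow_le_pow_left₀ (abs_nonneg _) hg 2
    have hy2 : (tx2 s / a) ^ 2 ≤ (f s) ^ 2 := by
      have : (tx2 s / a) ^ 2 = (tx2 s / |a|) ^ 2 := by
        rw [div_pow, div_pow, sq_abs]
      rw [this]; exact pow_le_pow_left₀ hhnn hh 2
    have hy2nn : 0 ≤ (tx2 s / a) ^ 2 := sq_nonneg _
    have hxy : |tx1 s * (tx2 s / a)| ≤ (f s) ^ 2 := by
      rw [abs_mul, abs_div, abs_of_nonneg (htx2nn s), sq]
      exact mul_le_mul hg hh hhnn hm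
    have b1 : |(-(lam1 * (tx1 s) ^ 2))| ≤ lam1 * (f s) ^ 2 := by
      rw [abs_neg, abs_of_nonneg (by positivity)]
      exact mul_le_mul_of_nonneg_left hx2 hlam1.le
    have b2 : |(-(eta2 * (lam1 - lam2) / eta1 * (tx2 s / a) ^ 2))|
        ≤ eta2 * |lam1 - lam2| / eta1 * (f s) ^ 2 := by
      rw [abs_neg, abs_mul, abs_div, abs_mul, abs_of_pos he2, abs_of_pos he1,
        abs_of_nonneg hy2nn]
      exact mul_le_mul_of_nonneg_left hy2 (by positivity)
    have b3 : |(lam1 - lam2 + lam1 * eta2 / eta1) * (tx1 s * (tx2 s / a))|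
        ≤ (|lam1 - lam2| + lam1 * eta2 / eta1) * (f s) ^ 2 := by
      rw [abs_mul]
      have hcoef : |lam1 - lam2 + lam1 * eta2 / eta1| ≤ |lam1 - lam2| + lam1 * eta2 / eta1 := by
        have hp : (0:ℝ) < lam1 * eta2 / eta1 := by positivity
        calc |lam1 - lam2 + lam1 * eta2 / eta1| ≤ |lam1 - lam2| + |lam1 * eta2 / eta1| :=
              abs_add_le _ _
          _ = |lam1 - lam2| + lam1 * eta2 / eta1 := by rw [abs_of_pos hp]
      exact mul_le_mul hcoef hxy (abs_nonneg _) (by positivity)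
    have hexpr : (-eta1 * tx1 s - lam1 * (tx1 s) ^ 2
        - (eta2 * (lam1 - lam2) / eta1) * (tx2 s / a) ^ 2
        + (lam1 - lam2 + lam1 * eta2 / eta1) * tx1 s * (tx2 s / a)) + eta1 * tx1 s
        = (-(lam1 * (tx1 s) ^ 2)) + (-(eta2 * (lam1 - lam2) / eta1 * (tx2 s / a) ^ 2))
          + (lam1 - lam2 + lam1 * eta2 / eta1) * (tx1 s * (tx2 s / a)) := by ring
    rw [hexpr]
    have htri := abs_add_three (-(lam1 * (tx1 s) ^ 2))
      (-(eta2 * (lam1 - lam2) / eta1 * (tx2 s / a) ^ 2))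
      ((lam1 - lam2 + lam1 * eta2 / eta1) * (tx1 s * (tx2 s / a)))
    have hsum : lam1 * (f s)^2 + eta2 * |lam1 - lam2| / eta1 * (f s)^2
        + (|lam1 - lam2| + lam1 * eta2 / eta1) * (f s)^2 = L1 * (f s)^2 := by
      rw [hL1id]; ring
    linarith
  -- pointwise bound K2
  have K2 : ∀ s : ℝ,
      (-eta2 * tx2 s - lam2 * tx2 s * tx1 s + (lam2 / a) * (eta2 / eta1) * (tx2 s) ^ 2) / |a|
        ≤ -eta2 * (tx2 s / |a|) + L1 * (f s) ^ 2 := by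
    intro s
    have hg : |tx1 s| ≤ f s := le_max_left _ _
    have hh : tx2 s / |a| ≤ f s := le_max_right _ _
    have hhnn : 0 ≤ tx2 s / |a| := div_nonneg (htx2nn s) (abs_nonneg a)
    have hm : 0 ≤ f s := hfnn s
    have hY : tx2 s = (tx2 s / |a|) * |a| := (div_mul_cancel₀ _ haabs.ne').symm
    have e3 : (lam2 / a) * (eta2 / eta1) * (tx2 s) ^ 2
        = lam2 * (eta2 / eta1) * (tx2 s / |a|) ^ 2 * a := by
      rw [div_pow, sq_abs]
      field_simp
    rw [div_le_iff₀ haabs]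
    have hX2 : -(tx1 s) ≤ f s := le_trans (neg_le_abs _) hg
    have haa : a ≤ |a| := le_abs_self a
    have hL1ge : lam2 * (1 + eta2 / eta1) ≤ L1 := by
      rw [hL1id]
      have h1 : lam2 ≤ lam1 + |lam1 - lam2| := by
        have := neg_abs_le (lam1 - lam2); linarith
      have h2 : lam2 * (eta2 / eta1) ≤ (lam1 + |lam1 - lam2|) * (eta2 / eta1) :=
        mul_le_mul_of_nonneg_right h1 (by positivity)
      have hexp1 : lam2 * (1 + eta2 / eta1) = lam2 + lam2 * (eta2 / eta1) := by ring
      have hexp2 : eta2 * |lam1 - lam2| / eta1 + lam1 * eta2 / eta1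
          = (lam1 + |lam1 - lam2|) * (eta2 / eta1) := by ring
      linarith
    have c1 : tx2 s / |a| * (-(tx1 s)) ≤ f s * f s :=
      le_trans (mul_le_mul_of_nonneg_left hX2 hhnn)
        (mul_le_mul_of_nonneg_right hh hm)
    have c2 : lam2 * |a| * (tx2 s / |a| * (-(tx1 s))) ≤ lam2 * |a| * (f s * f s) :=
      mul_le_mul_of_nonneg_left c1 (by positivity)
    have c3 : lam2 * |a| * (tx2 s / |a| * (-(tx1 s))) = -(lam2 * tx2 s * tx1 s) := by
      field_simp
    have key1 : -(lam2 * tx2 s * tx1 s) ≤ lam2 * (f s)^2 * |a| := by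
      rw [← c3]
      calc lam2 * |a| * (tx2 s / |a| * (-(tx1 s))) ≤ lam2 * |a| * (f s * f s) := c2
        _ = lam2 * (f s)^2 * |a| := by ring
    have key2 : lam2 / a * (eta2 / eta1) * (tx2 s) ^ 2 ≤ lam2 * (eta2 / eta1) * (f s)^2 * |a| := by
      rw [e3]
      have h1 : lam2 * (eta2 / eta1) * (tx2 s / |a|) ^ 2 * a
          ≤ lam2 * (eta2 / eta1) * (tx2 s / |a|) ^ 2 * |a| :=
        mul_le_mul_of_nonneg_left haa (by positivity)
      have h2 : (tx2 s / |a|)^2 ≤ (f s)^2 := pow_le_pow_left₀ hhnn hh 2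
      have h3 : lam2 * (eta2 / eta1) * (tx2 s / |a|) ^ 2 * |a|
          ≤ lam2 * (eta2 / eta1) * (f s)^2 * |a| := by
        have := mul_le_mul_of_nonneg_left h2 (by positivity : (0:ℝ) ≤ lam2 * (eta2 / eta1))
        have := mul_le_mul_of_nonneg_right this (abs_nonneg a)
        calc lam2 * (eta2 / eta1) * (tx2 s / |a|) ^ 2 * |a|
            = lam2 * (eta2 / eta1) * (tx2 s / |a|) ^ 2 * |a| := rfl
          _ ≤ lam2 * (eta2 / eta1) * (f s)^2 * |a| := by nlinarith [abs_nonneg a]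
      exact le_trans h1 h3
    have hrhs : (-eta2 * (tx2 s / |a|) + L1 * (f s) ^ 2) * |a|
        = -eta2 * tx2 s + L1 * (f s)^2 * |a| := by
      field_simp
    rw [hrhs]
    have hfin : lam2 * (f s)^2 * |a| + lam2 * (eta2 / eta1) * (f s)^2 * |a|
        ≤ L1 * (f s)^2 * |a| := by
      have hmul := mul_le_mul_of_nonneg_right hL1ge
        (by positivity : (0:ℝ) ≤ (f s)^2 * |a|)
      have hexp : lam2 * (1 + eta2 / eta1) * ((f s)^2 * |a|)
          = lam2 * (f s)^2 * |a| + lam2 * (eta2 / eta1) * (f s)^2 * |a| := by ring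
      have hexp2 : L1 * ((f s)^2 * |a|) = L1 * (f s)^2 * |a| := by ring
      linarith
    linarith [key1, key2, hfin]
  intro t ht
  -- derivative of the second component scaled
  have hhd : ∀ x : ℝ, HasDerivAt (fun s => tx2 s / |a|)
      ((-eta2 * tx2 x - lam2 * tx2 x * tx1 x + (lam2 / a) * (eta2 / eta1) * (tx2 x) ^ 2) / |a|) x :=
    fun x => (hode2 x).div_const _
  -- liminf-slope bound for f
  have hslope : ∀ x : ℝ, ∀ r, -L * f x + L1 * (f x)^2 < r →
      ∃ᶠ z in 𝓝[>] x, slope f x z < r := by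
    intro x r hr
    have hfx : 0 ≤ f x := hfnn x
    obtain ⟨G, hGle, hGt⟩ := tendsto_slope_abs_of_hasDerivAt (hode1 x)
      (c := -eta1 * |tx1 x| + L1 * (f x)^2)
      (fun hpos => by
        have h1 := (abs_le.1 (K1 x)).2
        rw [abs_of_pos hpos]
        linarith)
      (fun hneg => by
        have h1 := (abs_le.1 (K1 x)).1
        rw [abs_of_neg hneg]
        linarith)
      (fun hzero => by
        have h1 := K1 x
        rw [hzero] at h1 ⊢
        simp only [mul_zero, add_zero, abs_zero] at h1 ⊢
        linarith)
    have hHt : Tendsto (slope (fun s => tx2 s / |a|) x) (𝓝[>] x)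
        (𝓝 ((-eta2 * tx2 x - lam2 * tx2 x * tx1 x + (lam2 / a) * (eta2 / eta1) * (tx2 x) ^ 2) / |a|)) :=
      (hasDerivAt_iff_tendsto_slope.1 (hhd x)).mono_left
        (nhdsWithin_mono x fun z hz => ne_of_gt hz)
    have hGr : tx2 x / |a| ≤ |tx1 x| → G < r := by
      intro hle
      have hfeq : f x = |tx1 x| := max_eq_left hle
      have : eta1 * |tx1 x| ≥ L * f x := by
        rw [hfeq]
        exact mul_le_mul_of_nonneg_right hLe1 (abs_nonneg _)
      linarith
    have hHr : |tx1 x| ≤ tx2 x / |a| → (-eta2 * tx2 x - lam2 * tx2 x * tx1 x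
        + (lam2 / a) * (eta2 / eta1) * (tx2 x) ^ 2) / |a| < r := by
      intro hle
      have hfeq : f x = tx2 x / |a| := max_eq_right hle
      have h1 := K2 x
      have h2 : eta2 * (tx2 x / |a|) ≥ L * f x := by
        rw [hfeq]
        exact mul_le_mul_of_nonneg_right hLe2 (div_nonneg (htx2nn x) (abs_nonneg a))
      linarith
    exact (eventually_slope_max_lt ((hc1.abs).continuousAt) ((hc2.div_const _).continuousAt)
      hGt hHt hGr hHr).frequently
  -- comparison with the explicit Riccati solution, for each ε > 0
  have comp : ∀ ε : ℝ, 0 < ε → (y0 + ε) * (L1 + ε) / L < 1 →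
      f t ≤ (y0 + ε) * Real.exp (-(L * t)) / (1 - (y0 + ε) * (L1 + ε) / L) := by
    intro ε hε hk1
    set y1 := y0 + ε with hy1
    set L2 := L1 + ε with hL2
    set k := y1 * L2 / L with hk
    have hy1pos : 0 < y1 := by have := hy0nn; simp only [hy1]; linarith
    have hL2pos : 0 < L2 := by simp only [hL2]; linarith
    have hkpos : 0 < k := by positivity
    have hklt : k < 1 := hk1
    have hD : ∀ s : ℝ, 0 < 1 - k + k * Real.exp (-(L * s)) := fun s => by
      have h1 := Real.exp_pos (-(L * s))
      nlinarith
    set B : ℝ → ℝ := fun s => y1 * Real.exp (-(L * s)) / (1 - k + k * Real.exp (-(L * s))) with hBdef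
    have hBpos : ∀ s, 0 < B s := fun s => div_pos (by positivity) (hD s)
    have hLk : L2 * y1 = k * L := by
      rw [hk]; field_simp
    have hBderiv : ∀ s : ℝ, HasDerivAt B (-L * B s + L2 * (B s)^2) s := by
      intro s
      have h1 : HasDerivAt (fun u : ℝ => -(L * u)) (-L) s := by
        simpa using ((hasDerivAt_id s).const_mul L).fun_neg
      have hexp : HasDerivAt (fun u : ℝ => Real.exp (-(L * u)))
          (Real.exp (-(L * s)) * (-L)) s := h1.exp
      have hnum : HasDerivAt (fun u : ℝ => y1 * Real.exp (-(L * u)))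
          (y1 * (Real.exp (-(L * s)) * (-L))) s := hexp.const_mul y1
      have hden : HasDerivAt (fun u : ℝ => 1 - k + k * Real.exp (-(L * u)))
          (k * (Real.exp (-(L * s)) * (-L))) s := (hexp.const_mul k).const_add _
      have hdiv := hnum.div hden (hD s).ne'
      have hBs : B s = y1 * Real.exp (-(L * s)) / (1 - k + k * Real.exp (-(L * s))) := rfl
      have hDs := (hD s).ne'
      have heq : -L * B s + L2 * (B s)^2
          = (y1 * (Real.exp (-(L * s)) * (-L)) * (1 - k + k * Real.exp (-(L * s)))
            - y1 * Real.exp (-(L * s)) * (k * (Real.exp (-(L * s)) * (-L))))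
            / (1 - k + k * Real.exp (-(L * s)))^2 := by
        rw [hBs]
        clear_value B k L2 y1
        field_simp
        linear_combination (Real.exp (-(L * s)) / (1 - k + k * Real.exp (-(L * s)))^2) * hLk
      rw [heq]
      exact hdiv
    have hB0 : B 0 = y1 := by
      simp [hBdef]
    have hbound : ∀ x ∈ Ico (0:ℝ) t, f x = B x →
        -L * f x + L1 * (f x)^2 < -L * B x + L2 * (B x)^2 := by
      intro x _ heq
      rw [heq]
      have h1 := hBpos x
      nlinarith [pow_pos (hBpos x) 2]
    have hmain := image_le_of_liminf_slope_right_lt_deriv_boundary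
      (hfc.continuousOn)
      (fun x _ r hr => hslope x r hr)
      (by rw [hB0]; show y0 ≤ y1; simp only [hy1]; linarith)
      hBderiv hbound ⟨ht, le_rfl⟩
    have hBt : B t ≤ y1 * Real.exp (-(L * t)) / (1 - k) := by
      rw [hBdef]
      have h1k : (0:ℝ) < 1 - k := by linarith
      rw [div_le_div_iff₀ (hD t) h1k]
      have hE := Real.exp_pos (-(L * t))
      nlinarith [mul_nonneg (mul_nonneg hy1pos.le hE.le) (mul_nonneg hkpos.le hE.le)]
    exact le_trans hmain hBt
  -- pass to the limit ε → 0⁺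
  have k0le : y0 * L1 / L ≤ 1/2 := by
    rw [le_div_iff₀ (by positivity : (0:ℝ) < 2 * L1)] at hy0
    rw [div_le_iff₀ hLpos]
    linarith
  have hdenne : (1:ℝ) - (y0 + 0) * (L1 + 0) / L ≠ 0 := by
    simp only [add_zero]
    linarith
  have hlim : Tendsto (fun ε : ℝ => (y0 + ε) * Real.exp (-(L * t)) / (1 - (y0 + ε) * (L1 + ε) / L))
      (𝓝[>] 0) (𝓝 (y0 * Real.exp (-(L * t)) / (1 - y0 * L1 / L))) := by
    have hc : ContinuousAt (fun ε : ℝ =>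
        (y0 + ε) * Real.exp (-(L * t)) / (1 - (y0 + ε) * (L1 + ε) / L)) 0 := by
      apply ContinuousAt.div
      · fun_prop
      · fun_prop
      · exact hdenne
    have := hc.tendsto
    simp only [add_zero] at this
    exact this.mono_left nhdsWithin_le_nhds
  have hev : ∀ᶠ ε in 𝓝[>] (0:ℝ),
      f t ≤ (y0 + ε) * Real.exp (-(L * t)) / (1 - (y0 + ε) * (L1 + ε) / L) := by
    have hc2 : ContinuousAt (fun ε : ℝ => (y0 + ε) * (L1 + ε) / L) 0 := by fun_prop
    have hval : (y0 + 0) * (L1 + 0) / L < 1 := by simp only [add_zero]; linarith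
    have hklt : ∀ᶠ ε in 𝓝 (0:ℝ), (y0 + ε) * (L1 + ε) / L < 1 :=
      hc2.eventually_lt continuousAt_const hval
    filter_upwards [nhdsWithin_le_nhds hklt, self_mem_nhdsWithin] with ε h1 h2
    exact comp ε h2 h1
  have hft : f t ≤ y0 * Real.exp (-(L * t)) / (1 - y0 * L1 / L) := ge_of_tendsto hlim hev
  have hhalf : (0:ℝ) < 1 - y0 * L1 / L := by linarith
  have h2y : y0 * Real.exp (-(L * t)) / (1 - y0 * L1 / L) ≤ 2 * y0 * Real.exp (-(L * t)) := by
    rw [div_le_iff₀ hhalf]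
    have hE := (Real.exp_pos (-(L * t))).le
    nlinarith [mul_nonneg hy0nn hE]
  have hmain2 : f t ≤ 2 * y0 * Real.exp (-(L * t)) := le_trans hft h2y
  have hearg : -(L * t) = -t * L := by ring
  rw [← hearg]
  constructor
  · exact le_trans (le_max_left _ _) hmain2
  · have h3 : tx2 t / |a| ≤ f t := le_max_right _ _
    have h4 : tx2 t ≤ f t * |a| := (div_le_iff₀ haabs).1 h3
    calc tx2 t ≤ f t * |a| := h4
      _ ≤ 2 * y0 * Real.exp (-(L * t)) * |a| :=
          mul_le_mul_of_nonneg_right hmain2 (abs_nonneg a)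
      _ = 2 * |a| * y0 * Real.exp (-(L * t)) := by ring
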